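/- Under the standing construction with biorthogonal functionals, let u(t) := Σ_{n=1}^∞ z_n(t) v_n, w(t) := Σ_{n=1}^∞ χ_{[t_n,1)}(t) · (1/Γ(1−α)) (∫_0^t (t−s)^{−α} z_{n+1}′(s) ds) v_{n+1}, H(t,x) := V₁*(x) χ_{[0,t₁)}(t) + Σ_{i=1}^∞ [ i^{−2} V_i*(x) χ_{[t_i,∞)}(t) + (i+1)^{−2} V_{i+1}*(x) ((t − t_i)/(t_{i+1} − t_i)) χ_{[t_i, t_{i+1})}(t) ], φ(s) := min{s+1, 1} and f_α(t,x) := φ(H(t,x)) w(t). Then H(t, u(t)) ≥ 0 for all t ∈ [0,1), hence φ(H(t,u(t))) = 1 and f_α(t, u(t)) = w(t) for all t ∈ [0,1); consequently u is a solution of the fractional Cauchy problem cD^α u(t) = f_α(t, u(t)) on [0,1) with u(0) = v₁, i.e., for every t ∈ (0,1) the map r ↦ (1/Γ(1−α)) ∫_0^r (r−s)^{−α}(u(s)−v₁) ds is differentiable at t with derivative f_α(t,u(t)). -/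

import Mathlib

open Set Filter MeasureTheory
open intervalIntegral
open scoped Convolution

noncomputable def FCPker (α : ℝ) : ℝ → ℝ := Set.indicator (Set.Ioi 0) (fun τ => τ ^ (-α))

lemma FCPker_locallyIntegrable {α : ℝ} (hα : α < 1) :
    MeasureTheory.LocallyIntegrable (FCPker α) MeasureTheory.volume := by
  rw [MeasureTheory.locallyIntegrable_iff]
  intro K hK
  obtain ⟨T, hT⟩ := hK.isBounded.subset_closedBall 0
  have hT' : K ⊆ Set.Icc (-T) T := by
    rw [Real.closedBall_eq_Icc, zero_sub, zero_add] at hT; exact hT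
  apply MeasureTheory.IntegrableOn.mono_set _ hT'
  have h1 : IntervalIntegrable (fun x : ℝ => x ^ (-α)) volume 0 T :=
    intervalIntegrable_rpow' (by linarith)
  have h2 : MeasureTheory.IntegrableOn (fun x : ℝ => x ^ (-α)) (Set.Ioc 0 T) volume := by
    rcases le_total (0:ℝ) T with h | h
    · rw [intervalIntegrable_iff, Set.uIoc_of_le h] at h1; exact h1
    · rw [Set.Ioc_eq_empty (not_lt.2 h)]
      simp [MeasureTheory.IntegrableOn]
  have h3 : MeasureTheory.Integrable (Set.indicator (Set.Ioc 0 T) fun x : ℝ => x ^ (-α)) volume :=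
    (MeasureTheory.integrable_indicator_iff measurableSet_Ioc).2 h2
  apply (h3.integrableOn (s := Set.Icc (-T) T)).congr_fun _ measurableSet_Icc
  intro x hx
  by_cases h : x ∈ Set.Ioi (0:ℝ)
  · rw [FCPker, Set.indicator_of_mem h, Set.indicator_of_mem (show x ∈ Set.Ioc 0 T from ⟨h, hx.2⟩)]
  · rw [FCPker, Set.indicator_of_notMem h,
      Set.indicator_of_notMem (fun h' => h h'.1)]

lemma FCPconv_eq {α : ℝ} (g : ℝ → ℝ) {a : ℝ} (ha : 0 < a)
    (hg0 : ∀ x ≤ a, g x = 0) {r : ℝ} (hr : 0 ≤ r) :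
    (FCPker α ⋆[ContinuousLinearMap.mul ℝ ℝ, volume] g) r
      = ∫ σ in (0:ℝ)..r, (r - σ) ^ (-α) * g σ := by
  rw [MeasureTheory.convolution_def]
  have h1 : ∀ τ : ℝ, (ContinuousLinearMap.mul ℝ ℝ) (FCPker α τ) (g (r - τ))
      = Set.indicator (Set.Ioc 0 r) (fun τ => τ ^ (-α) * g (r - τ)) τ := by
    intro τ
    simp only [ContinuousLinearMap.mul_apply']
    by_cases h : τ ∈ Set.Ioc 0 r
    · rw [Set.indicator_of_mem h, FCPker, Set.indicator_of_mem (show τ ∈ Set.Ioi 0 from h.1)]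
    · rw [Set.indicator_of_notMem h]
      rcases le_or_gt τ 0 with h' | h'
      · rw [FCPker, Set.indicator_of_notMem (by simpa using h'), zero_mul]
      · have hτr : r < τ := by by_contra h2; exact h ⟨h', not_lt.1 h2⟩
        rw [hg0 (r - τ) (by linarith), mul_zero]
  rw [MeasureTheory.integral_congr_ae (Filter.Eventually.of_forall h1),
    MeasureTheory.integral_indicator measurableSet_Ioc,
    ← intervalIntegral.integral_of_le hr]
  have h2 := intervalIntegral.integral_comp_sub_left (a := 0) (b := r)
    (fun σ => (r - σ) ^ (-α) * g σ) r
  simp only [sub_sub_cancel, sub_zero, sub_self] at h2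
  exact h2

lemma FCP_deriv_zero_below {g : ℝ → ℝ} {a : ℝ} (hg0 : ∀ y ≤ a, g y = 0)
    {x : ℝ} (hx : x < a) : deriv g x = 0 := by
  have h : g =ᶠ[nhds x] (fun _ => (0:ℝ)) := by
    filter_upwards [Iio_mem_nhds hx] with y hy using hg0 y hy.le
  rw [h.deriv_eq]; exact deriv_const x 0

lemma FCP_hasDerivAt (α : ℝ) (hα : α ∈ Set.Ioo (0:ℝ) 1) (g : ℝ → ℝ) {a b : ℝ} (ha : 0 < a)
    (hg : ContDiff ℝ 1 g) (hg0 : ∀ x ≤ a, g x = 0) (hgb : ∀ x, b ≤ x → g x = 0)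
    {s : ℝ} (hs : 0 < s) :
    HasDerivAt (fun r => ∫ σ in (0:ℝ)..r, (r - σ) ^ (-α) * g σ)
      (∫ σ in (0:ℝ)..s, (s - σ) ^ (-α) * deriv g σ) s := by
  have hsupp : HasCompactSupport g := by
    apply HasCompactSupport.intro (isCompact_Icc (a := a) (b := b))
    intro x hx
    rcases not_and_or.1 hx with h | h
    · exact hg0 x (le_of_not_ge h)
    · exact hgb x (le_of_not_ge h)
  have hconv := HasCompactSupport.hasDerivAt_convolution_right
    (L := ContinuousLinearMap.mul ℝ ℝ) (FCPker_locallyIntegrable hα.2) hsupp hg s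
  have hg0' : ∀ x ≤ a / 2, deriv g x = 0 := fun x hx =>
    FCP_deriv_zero_below hg0 (by linarith)
  have hval : (FCPker α ⋆[ContinuousLinearMap.mul ℝ ℝ, volume] deriv g) s
      = ∫ σ in (0:ℝ)..s, (s - σ) ^ (-α) * deriv g σ :=
    FCPconv_eq (deriv g) (half_pos ha) hg0' hs.le
  rw [hval] at hconv
  apply hconv.congr_of_eventuallyEq
  filter_upwards [Ioi_mem_nhds hs] with r hr
  exact (FCPconv_eq g ha hg0 hr.le).symm


/-- Under the standing construction with biorthogonal functionals, one has
`H(t,u(t)) ≥ 0`, hence `φ(H(t,u(t))) = 1` and `f_α(t,u(t)) = w(t)` on `[0,1)`;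
consequently `u` solves the fractional Cauchy problem `cD^α u = f_α(t,u)` on `(0,1)`
with `u(0) = v₁`. -/
theorem u_solves_FCP
    (α : ℝ) (hα : α ∈ Set.Ioo (0 : ℝ) 1)
    (X : Type*) [NormedAddCommGroup X] [NormedSpace ℝ X] [CompleteSpace X]
    (t : ℕ → ℝ) (z : ℕ → ℝ → ℝ) (v : ℕ → X) (V : ℕ → X →L[ℝ] ℝ)
    (ht_mem : ∀ n, 1 ≤ n → t n ∈ Set.Ioo (0 : ℝ) 1)
    (ht_mono : ∀ n, 1 ≤ n → t n < t (n + 1))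
    (ht_lim : Filter.Tendsto t Filter.atTop (nhds 1))
    (ht_step : ∀ n, 2 ≤ n → t (n + 1) - t n < t n - t (n - 1))
    (hz1 : ∀ s : ℝ, z 1 s = 1)
    (hz_smooth : ∀ n, 2 ≤ n → ContDiff ℝ 1 (z n))
    (hz_one : ∀ n, 2 ≤ n → ∀ s ∈ Set.Icc (t n) (t (n + 1)), z n s = 1)
    (hz_mid : ∀ n, 2 ≤ n → ∀ s ∈ Set.Ioo ((t (n - 1) + t n) / 2) (t n) ∪
        Set.Ioo (t (n + 1)) ((t (n + 1) + t (n + 2)) / 2),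
      0 < z n s ∧ z n s < 1)
    (hz_zero : ∀ n, 2 ≤ n → ∀ s : ℝ,
      s ∉ Set.Ioo ((t (n - 1) + t n) / 2) ((t (n + 1) + t (n + 2)) / 2) → z n s = 0)
    (hz_deriv_nonneg : ∀ n, 2 ≤ n →
      ∀ s ∈ Set.Icc ((t (n - 1) + t n) / 2) (t n), 0 ≤ deriv (z n) s)
    (hz_deriv_nonpos : ∀ n, 2 ≤ n →
      ∀ s ∈ Set.Icc (t (n + 1)) ((t (n + 1) + t (n + 2)) / 2), deriv (z n) s ≤ 0)
    (hv : ∀ n, 1 ≤ n → ‖v n‖ = 1)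
    (hV_norm : ∀ n, 1 ≤ n → ‖V n‖ ≤ 1)
    (hV_biorth : ∀ n m, 1 ≤ n → 1 ≤ m → V n (v m) = if n = m then 1 else 0) :
    ∀ (w : ℝ → X) (H : ℝ → X → ℝ) (f : ℝ → X → X),
    ∀ (u w : ℝ → X) (H : ℝ → X → ℝ) (f : ℝ → X → X),
      (∀ s : ℝ, u s = ∑' n : ℕ, z (n + 1) s • v (n + 1)) →
      (∀ s : ℝ, w s = ∑' n : ℕ,
        Set.indicator (Set.Ico (t (n + 1)) 1)
          (fun r : ℝ => (1 / Real.Gamma (1 - α)) *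
            ∫ σ in (0 : ℝ)..r, ((r - σ) ^ (-α)) * deriv (z (n + 2)) σ) s • v (n + 2)) →
      (∀ (s : ℝ) (x : X), H s x =
        V 1 x * Set.indicator (Set.Ico (0 : ℝ) (t 1)) (fun _ => (1 : ℝ)) s +
        ∑' i : ℕ,
          ((1 / ((i : ℝ) + 1) ^ 2) * V (i + 1) x *
              Set.indicator (Set.Ici (t (i + 1))) (fun _ => (1 : ℝ)) s +
            (1 / ((i : ℝ) + 2) ^ 2) * V (i + 2) x *
              ((s - t (i + 1)) / (t (i + 2) - t (i + 1))) *
              Set.indicator (Set.Ico (t (i + 1)) (t (i + 2))) (fun _ => (1 : ℝ)) s)) →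
      (∀ (s : ℝ) (x : X), f s x = (min (H s x + 1) 1) • w s) →
      -- H(t, u(t)) ≥ 0 on [0,1)
      (∀ s ∈ Set.Ico (0 : ℝ) 1, 0 ≤ H s (u s)) ∧
      -- hence φ(H(t,u(t))) = 1
      (∀ s ∈ Set.Ico (0 : ℝ) 1, min (H s (u s) + 1) 1 = 1) ∧
      -- and f_α(t, u(t)) = w(t)
      (∀ s ∈ Set.Ico (0 : ℝ) 1, f s (u s) = w s) ∧
      -- u(0) = v₁
      u 0 = v 1 ∧
      -- u solves cD^α u(t) = f_α(t, u(t)) on (0,1)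
      (∀ s ∈ Set.Ioo (0 : ℝ) 1,
        HasDerivAt (fun r : ℝ => (1 / Real.Gamma (1 - α)) •
          ∫ σ in (0 : ℝ)..r, ((r - σ) ^ (-α)) • (u σ - v 1)) (f s (u s)) s) := by
  intro _w0 _H0 _f0 u w H f hu hw hH hf
  obtain ⟨hα0, hα1⟩ := hα
  have ht_pos : ∀ n, 1 ≤ n → 0 < t n := fun n hn => (ht_mem n hn).1
  have hmono : ∀ m n, 1 ≤ m → m ≤ n → t m ≤ t n := by
    intro m n hm hmn
    induction n, hmn using Nat.le_induction with
    | base => exact le_rfl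
    | succ n hn ih => exact ih.trans (ht_mono n (hm.trans hn)).le
  have z_nonneg : ∀ m, 1 ≤ m → ∀ x : ℝ, 0 ≤ z m x := by
    intro m hm x
    rcases eq_or_lt_of_le hm with h1 | h2
    · rw [← h1, hz1]; norm_num
    · by_cases hx : x ∈ Set.Ioo ((t (m - 1) + t m) / 2) ((t (m + 1) + t (m + 2)) / 2)
      · rcases lt_or_ge x (t m) with h | h
        · exact (hz_mid m h2 x (Or.inl ⟨hx.1, h⟩)).1.le
        · rcases le_or_gt x (t (m + 1)) with h' | h'
          · rw [hz_one m h2 x ⟨h, h'⟩]; norm_num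
          · exact (hz_mid m h2 x (Or.inr ⟨h', hx.2⟩)).1.le
      · rw [hz_zero m h2 x hx]
  have zcut : ∀ (σ : ℝ) (n N : ℕ), 1 ≤ N → σ ≤ t N → N ≤ n → z (n + 1) σ = 0 := by
    intro σ n N hN hσ hn
    apply hz_zero (n + 1) (by omega)
    intro hmem
    have h1 : t N ≤ t n := hmono N n hN hn
    have h2 : (t n + t (n + 1)) / 2 < σ := hmem.1
    have h3 : t n < t (n + 1) := ht_mono n (by omega)
    linarith
  have usum : ∀ (N : ℕ) (σ : ℝ), 1 ≤ N → σ ≤ t N →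
      u σ = ∑ n ∈ Finset.range N, z (n + 1) σ • v (n + 1) := by
    intro N σ hN hσ
    rw [hu σ]
    exact tsum_eq_sum (fun n hn => by
      rw [zcut σ n N hN hσ (by simpa using hn), zero_smul])
  have Vu : ∀ (i : ℕ), 1 ≤ i → ∀ (N : ℕ) (σ : ℝ), 1 ≤ N → σ ≤ t N →
      V i (u σ) = z i σ := by
    intro i hi N σ hN hσ
    have hsum : Summable (fun n => z (n + 1) σ • v (n + 1)) :=
      summable_of_ne_finset_zero (s := Finset.range N) (fun n hn => by
        rw [zcut σ n N hN hσ (by simpa using hn), zero_smul])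
    have hside : ∀ n, n ≠ i - 1 → V i (z (n + 1) σ • v (n + 1)) = 0 := by
      intro n hn
      rw [(V i).map_smul, hV_biorth i (n + 1) hi (by omega), if_neg (by omega),
        smul_eq_mul, mul_zero]
    rw [hu σ, (V i).map_tsum hsum, tsum_eq_single (i - 1) hside,
      Nat.sub_add_cancel hi, (V i).map_smul, hV_biorth i i hi hi, if_pos rfl,
      smul_eq_mul, mul_one]
  have key : ∀ s ∈ Set.Ico (0 : ℝ) 1, 0 ≤ H s (u s) := by
    intro s hs
    obtain ⟨N, hNs, hN1⟩ := ((ht_lim.eventually (eventually_gt_nhds hs.2)).and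
      (eventually_ge_atTop 1)).exists
    rw [hH]
    apply add_nonneg
    · rw [Vu 1 le_rfl N s hN1 hNs.le, hz1, one_mul]
      exact Set.indicator_nonneg (fun _ _ => zero_le_one) s
    · apply tsum_nonneg
      intro i
      apply add_nonneg
      · apply mul_nonneg (mul_nonneg (by positivity) ?_)
          (Set.indicator_nonneg (fun _ _ => zero_le_one) s)
        rw [Vu (i + 1) (by omega) N s hN1 hNs.le]
        exact z_nonneg (i + 1) (by omega) s
      · by_cases hmem : s ∈ Set.Ico (t (i + 1)) (t (i + 2))
        · rw [Set.indicator_of_mem hmem, mul_one]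
          apply mul_nonneg (mul_nonneg (by positivity) ?_) ?_
          · rw [Vu (i + 2) (by omega) N s hN1 hNs.le]
            exact z_nonneg (i + 2) (by omega) s
          · apply div_nonneg
            · have := hmem.1; linarith
            · have := ht_mono (i + 1) (by omega); linarith
        · rw [Set.indicator_of_notMem hmem, mul_zero]
  have key2 : ∀ s ∈ Set.Ico (0 : ℝ) 1, min (H s (u s) + 1) 1 = 1 := fun s hs =>
    min_eq_right (by linarith [key s hs])
  have key3 : ∀ s ∈ Set.Ico (0 : ℝ) 1, f s (u s) = w s := fun s hs => by
    rw [hf, key2 s hs, one_smul]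
  have hu0 : u 0 = v 1 := by
    rw [hu 0, tsum_eq_single 0 (fun n hn => by
      rw [zcut 0 n 1 le_rfl (ht_pos 1 le_rfl).le (by omega), zero_smul])]
    norm_num [hz1]
  refine ⟨key, key2, key3, hu0, ?_⟩
  intro s hs
  obtain ⟨N, hNs, hN1⟩ := ((ht_lim.eventually (eventually_gt_nhds hs.2)).and
    (eventually_ge_atTop 1)).exists
  obtain ⟨K, rfl⟩ : ∃ K, N = K + 1 := ⟨N - 1, by omega⟩
  have hzlow : ∀ (i : ℕ) (x : ℝ), x ≤ (t (i + 1) + t (i + 2)) / 2 → z (i + 2) x = 0 := by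
    intro i x hx
    apply hz_zero (i + 2) (by omega)
    intro hmem
    have h1 : (t (i + 1) + t (i + 2)) / 2 < x := hmem.1
    linarith
  have hzhigh : ∀ (i : ℕ) (x : ℝ), (t (i + 3) + t (i + 4)) / 2 ≤ x → z (i + 2) x = 0 := by
    intro i x hx
    apply hz_zero (i + 2) (by omega)
    intro hmem
    have h2 : x < (t (i + 3) + t (i + 4)) / 2 := hmem.2
    linarith
  have hApos : ∀ i : ℕ, 0 < (t (i + 1) + t (i + 2)) / 2 := fun i => by
    have h1 := ht_pos (i + 1) (by omega); have h2 := ht_pos (i + 2) (by omega); linarith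
  have husub : ∀ σ : ℝ, σ ≤ t (K + 1) →
      u σ - v 1 = ∑ i ∈ Finset.range K, z (i + 2) σ • v (i + 2) := by
    intro σ hσ
    rw [usum (K + 1) σ (by omega) hσ, Finset.sum_range_succ']
    have h0 : z (0 + 1) σ • v (0 + 1) = v 1 := by norm_num [hz1]
    rw [h0, add_sub_cancel_right]
  have hInt : ∀ (m : ℕ), 2 ≤ m → ∀ r : ℝ,
      IntervalIntegrable (fun σ => (r - σ) ^ (-α) * z m σ) volume 0 r := by
    intro m hm r
    have base : IntervalIntegrable (fun x : ℝ => x ^ (-α)) volume r 0 :=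
      intervalIntegrable_rpow' (by linarith)
    have h1 := base.comp_sub_left r
    simp only [sub_self, sub_zero] at h1
    exact h1.mul_continuousOn ((hz_smooth m hm).continuous.continuousOn)
  have hD : ∀ i ∈ Finset.range K,
      HasDerivAt (fun r => ∫ σ in (0 : ℝ)..r, (r - σ) ^ (-α) * z (i + 2) σ)
        (∫ σ in (0 : ℝ)..s, (s - σ) ^ (-α) * deriv (z (i + 2)) σ) s := fun i _ =>
    FCP_hasDerivAt α ⟨hα0, hα1⟩ (z (i + 2)) (hApos i) (hz_smooth (i + 2) (by omega))
      (hzlow i) (hzhigh i) hs.1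
  have hS : HasDerivAt
      (fun r => ∑ i ∈ Finset.range K,
        ((1 / Real.Gamma (1 - α)) * ∫ σ in (0 : ℝ)..r, (r - σ) ^ (-α) * z (i + 2) σ) • v (i + 2))
      (∑ i ∈ Finset.range K,
        ((1 / Real.Gamma (1 - α)) *
          ∫ σ in (0 : ℝ)..s, (s - σ) ^ (-α) * deriv (z (i + 2)) σ) • v (i + 2)) s :=
    HasDerivAt.fun_sum (fun i hi =>
      ((hD i hi).const_mul (1 / Real.Gamma (1 - α))).smul_const (v (i + 2)))
  have hev : (fun r : ℝ => (1 / Real.Gamma (1 - α)) •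
        ∫ σ in (0 : ℝ)..r, ((r - σ) ^ (-α)) • (u σ - v 1))
      =ᶠ[nhds s] (fun r => ∑ i ∈ Finset.range K,
        ((1 / Real.Gamma (1 - α)) *
          ∫ σ in (0 : ℝ)..r, (r - σ) ^ (-α) * z (i + 2) σ) • v (i + 2)) := by
    filter_upwards [Ioo_mem_nhds hs.1 hNs] with r hr
    have heq : Set.EqOn (fun σ => ((r - σ) ^ (-α)) • (u σ - v 1))
        (fun σ => ∑ i ∈ Finset.range K, ((r - σ) ^ (-α) * z (i + 2) σ) • v (i + 2))
        (Set.uIcc 0 r) := by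
      intro σ hσ
      have hσ' : σ ≤ t (K + 1) := by
        rw [Set.uIcc_of_le hr.1.le] at hσ
        exact hσ.2.trans hr.2.le
      simp only
      rw [husub σ hσ', Finset.smul_sum]
      exact Finset.sum_congr rfl fun i _ => smul_smul _ _ _
    have hint : ∀ i ∈ Finset.range K, IntervalIntegrable
        (fun σ => ((r - σ) ^ (-α) * z (i + 2) σ) • v (i + 2)) volume 0 r := by
      intro i _
      have h := hInt (i + 2) (by omega) r
      exact ⟨h.1.smul_const _, h.2.smul_const _⟩
    rw [intervalIntegral.integral_congr heq, intervalIntegral.integral_finset_sum hint,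
      Finset.smul_sum]
    refine Finset.sum_congr rfl fun i _ => ?_
    rw [intervalIntegral.integral_smul_const, smul_smul]
  have hws : w s = ∑ i ∈ Finset.range K,
      ((1 / Real.Gamma (1 - α)) *
        ∫ σ in (0 : ℝ)..s, (s - σ) ^ (-α) * deriv (z (i + 2)) σ) • v (i + 2) := by
    have hIzero : ∀ i : ℕ, s < t (i + 1) →
        (∫ σ in (0 : ℝ)..s, (s - σ) ^ (-α) * deriv (z (i + 2)) σ) = 0 := by
      intro i hi
      have heq : Set.EqOn (fun σ => (s - σ) ^ (-α) * deriv (z (i + 2)) σ)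
          (fun _ => (0 : ℝ)) (Set.uIcc 0 s) := by
        intro σ hσ
        have hσs : σ ≤ s := by rw [Set.uIcc_of_le hs.1.le] at hσ; exact hσ.2
        have hA : σ < (t (i + 1) + t (i + 2)) / 2 := by
          have := ht_mono (i + 1) (by omega); linarith
        simp only
        rw [FCP_deriv_zero_below (hzlow i) hA, mul_zero]
      rw [intervalIntegral.integral_congr heq]
      simp
    rw [hw s, tsum_eq_sum (s := Finset.range K) ?_]
    · refine Finset.sum_congr rfl fun i hi => ?_
      by_cases hmem : s ∈ Set.Ico (t (i + 1)) 1
      · rw [Set.indicator_of_mem hmem]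
      · rw [Set.indicator_of_notMem hmem]
        have hlt : s < t (i + 1) := by
          rcases lt_or_ge s (t (i + 1)) with h | h
          · exact h
          · exact absurd ⟨h, hs.2⟩ hmem
        rw [hIzero i hlt]; simp
    · intro n hn
      have hn' : K ≤ n := by simpa using hn
      have hlt : s < t (n + 1) := by
        have := hmono (K + 1) (n + 1) (by omega) (by omega); linarith [hNs]
      rw [Set.indicator_of_notMem (fun hmem => absurd hmem.1 (not_le.2 hlt)), zero_smul]
  rw [key3 s ⟨hs.1.le, hs.2⟩, hws]
  exact hS.congr_of_eventuallyEq hev
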